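/- Let S be a nonempty closed convex subset of ℝ^{d1×d2} (with the Frobenius inner product), let f be convex and differentiable with ‖∇f(X) − ∇f(Y)‖_F ≤ L‖X−Y‖_F for all X, Y (L > 0), and let M̂ be a minimizer of f over S. Fix k ≥ 1, set a_k = 2/(k+1), and suppose M_{k−1} ∈ S, V_{k−1} ∈ ℝ^{d1×d2}, Z_{k−1} = (1 − a_k)M_{k−1} + a_k V_{k−1}, M_k = Π_S(Z_{k−1} − (1/L)∇f(Z_{k−1})), and V_k = M_{k−1} + (1/a_k)(M_k − M_{k−1}). Then (1/a_k²)(f(M_k) − f(M̂)) + (L/2)‖V_k − M̂‖_F² ≤ ((1 − a_k)/a_k²)(f(M_{k−1}) − f(M̂)) + (L/2)‖V_{k−1} − M̂‖_F². -/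

import Mathlib

open Real

open scoped RealInnerProductSpace

section helpers
variable {E : Type*} [NormedAddCommGroup E] [InnerProductSpace ℝ E] [CompleteSpace E]

lemma apgd_lineDeriv {f : E → ℝ} {f' : E → E} (hgrad : ∀ x, HasGradientAt f (f' x) x)
    (x v : E) (t : ℝ) :
    HasDerivAt (fun t : ℝ => f (x + t • v)) ⟪f' (x + t • v), v⟫ t := by
  have h1 : HasDerivAt (fun t : ℝ => x + t • v) v t := by
    simpa using ((hasDerivAt_id t).smul_const v).const_add x
  have h2 := (hgrad (x + t • v)).hasFDerivAt.comp_hasDerivAt t h1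
  exact h2

lemma apgd_convex_first_order {f : E → ℝ} {f' : E → E} (hf : ConvexOn ℝ Set.univ f)
    (hgrad : ∀ x, HasGradientAt f (f' x) x) (x y : E) :
    f x + ⟪f' x, y - x⟫ ≤ f y := by
  set v := y - x with hv
  have hφ : ConvexOn ℝ Set.univ (fun t : ℝ => f (x + t • v)) := by
    have := hf.comp_affineMap
      (AffineMap.const ℝ ℝ x + (LinearMap.toSpanSingleton ℝ E v).toAffineMap)
    exact this
  have hderiv : HasDerivAt (fun t : ℝ => f (x + t • v)) ⟪f' x, v⟫ 0 := by
    simpa using apgd_lineDeriv hgrad x v 0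
  have hs := hφ.le_slope_of_hasDerivAt (Set.mem_univ (0:ℝ)) (Set.mem_univ (1:ℝ))
    one_pos hderiv
  have := hs
  rw [slope_def_field] at this
  simp only [zero_smul, add_zero, one_smul] at this
  have hxy : x + v = y := by rw [hv]; abel
  rw [hxy] at this
  have : ⟪f' x, v⟫ ≤ f y - f x := by
    simpa [div_one] using this
  linarith

lemma apgd_descent {f : E → ℝ} {f' : E → E} (hgrad : ∀ x, HasGradientAt f (f' x) x)
    {L : ℝ} (hL : 0 < L) (hlip : ∀ x y, ‖f' x - f' y‖ ≤ L * ‖x - y‖) (x y : E) :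
    f y ≤ f x + ⟪f' x, y - x⟫ + L / 2 * ‖y - x‖ ^ 2 := by
  set v := y - x with hv
  set ψ : ℝ → ℝ := fun t => f (x + t • v) - t * ⟪f' x, v⟫ - L * t ^ 2 / 2 * ‖v‖ ^ 2 with hψ
  have hd : ∀ t : ℝ, HasDerivAt ψ
      (⟪f' (x + t • v), v⟫ - ⟪f' x, v⟫ - L * t * ‖v‖ ^ 2) t := by
    intro t
    have h1 := apgd_lineDeriv hgrad x v t
    have h2 : HasDerivAt (fun t : ℝ => t * ⟪f' x, v⟫) ⟪f' x, v⟫ t := by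
      simpa using (hasDerivAt_id t).mul_const ⟪f' x, v⟫
    have h3 : HasDerivAt (fun t : ℝ => L * t ^ 2 / 2 * ‖v‖ ^ 2) (L * t * ‖v‖ ^ 2) t := by
      have := (((hasDerivAt_pow 2 t).const_mul L).div_const 2).mul_const (‖v‖ ^ 2)
      have e : L * ((2:ℕ) * t ^ (2 - 1)) / 2 * ‖v‖ ^ 2 = L * t * ‖v‖ ^ 2 := by
        rw [show (2:ℕ) - 1 = 1 from rfl]; push_cast; ring
      rw [e] at this
      exact this
    exact (h1.sub h2).sub h3
  have hderiv_nonpos : ∀ t ∈ Set.Ioo (0:ℝ) 1,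
      ⟪f' (x + t • v), v⟫ - ⟪f' x, v⟫ - L * t * ‖v‖ ^ 2 ≤ 0 := by
    intro t ht
    have h1 : ⟪f' (x + t • v) - f' x, v⟫ ≤ ‖f' (x + t • v) - f' x‖ * ‖v‖ :=
      real_inner_le_norm _ _
    have h2 : ‖f' (x + t • v) - f' x‖ ≤ L * ‖(x + t • v) - x‖ := hlip _ _
    have h3 : ‖(x + t • v) - x‖ = t * ‖v‖ := by
      rw [add_sub_cancel_left, norm_smul, Real.norm_eq_abs, abs_of_pos ht.1]
    rw [inner_sub_left] at h1
    rw [h3] at h2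
    have h5 : ‖f' (x + t • v) - f' x‖ * ‖v‖ ≤ L * t * ‖v‖ ^ 2 := by
      nlinarith [mul_le_mul_of_nonneg_right h2 (norm_nonneg v)]
    linarith
  have hanti : AntitoneOn ψ (Set.Icc (0:ℝ) 1) := by
    apply antitoneOn_of_deriv_nonpos (convex_Icc 0 1)
    · exact fun t _ => ((hd t).continuousAt).continuousWithinAt
    · intro t ht
      exact ((hd t).differentiableAt).differentiableWithinAt
    · intro t ht
      rw [interior_Icc] at ht
      rw [(hd t).deriv]
      exact hderiv_nonpos t ht
  have h01 := hanti (Set.mem_Icc.2 ⟨le_refl 0, zero_le_one⟩)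
    (Set.mem_Icc.2 ⟨zero_le_one, le_refl 1⟩) zero_le_one
  have hxy : x + (1:ℝ) • v = y := by rw [hv]; simp
  simp only [hψ, hxy, zero_smul, add_zero, one_mul, zero_pow, mul_zero, zero_mul,
    sub_zero, zero_div, one_pow] at h01
  nlinarith [h01]

lemma apgd_proj_vi {S : Set E} (hconv : Convex ℝ S) {p m : E} (hm : m ∈ S)
    (hproj : ∀ x ∈ S, ‖m - p‖ ≤ ‖x - p‖) {x : E} (hx : x ∈ S) :
    0 ≤ ⟪m - p, x - m⟫ := by
  set c := ⟪m - p, x - m⟫ with hc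
  set d := ‖x - m‖ ^ 2 with hd
  have hd0 : 0 ≤ d := by positivity
  have key : ∀ t : ℝ, 0 < t → t ≤ 1 → 0 ≤ 2 * c + t * d := by
    intro t ht0 ht1
    have hxt : m + t • (x - m) ∈ S := by
      have h := hconv hm hx (by linarith : (0:ℝ) ≤ 1 - t) ht0.le (by ring)
      convert h using 1
      module
    have h1 := hproj _ hxt
    have heq : m + t • (x - m) - p = (m - p) + t • (x - m) := by module
    have h2 : ‖m - p‖ ^ 2 ≤ ‖(m - p) + t • (x - m)‖ ^ 2 := by
      rw [← heq]
      exact pow_le_pow_left₀ (norm_nonneg _) h1 2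
    rw [norm_add_sq_real, real_inner_smul_right, norm_smul, Real.norm_eq_abs,
      abs_of_pos ht0, mul_pow] at h2
    have h3 : 0 ≤ t * (2 * c + t * d) := by nlinarith
    nlinarith
  by_contra hneg
  push_neg at hneg
  rcases eq_or_lt_of_le hd0 with hdz | hdpos
  · have := key 1 one_pos le_rfl
    nlinarith
  · have ht0 : 0 < min 1 (-c / d) := lt_min one_pos (div_pos (neg_pos.2 hneg) hdpos)
    have := key _ ht0 (min_le_left _ _)
    have h4 : min 1 (-c / d) * d ≤ (-c / d) * d :=
      mul_le_mul_of_nonneg_right (min_le_right _ _) hd0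
    rw [div_mul_cancel₀ _ hdpos.ne'] at h4
    linarith

end helpers

/-- One-step inequality for accelerated projected gradient descent: with `a_k = 2/(k+1)`,
`Z_{k−1} = (1 − a_k)M_{k−1} + a_k V_{k−1}`, `M_k = Π_S(Z_{k−1} − (1/L)∇f(Z_{k−1}))` and
`V_k = M_{k−1} + (1/a_k)(M_k − M_{k−1})`, one has
`(1/a_k²)(f(M_k) − f(M̂)) + (L/2)‖V_k − M̂‖² ≤ ((1−a_k)/a_k²)(f(M_{k−1}) − f(M̂)) + (L/2)‖V_{k−1} − M̂‖²`. -/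
theorem accelerated_one_step (d1 d2 : ℕ)
    (S : Set (EuclideanSpace ℝ (Fin d1 × Fin d2)))
    (hne : S.Nonempty) (hcl : IsClosed S) (hconv : Convex ℝ S)
    (f : EuclideanSpace ℝ (Fin d1 × Fin d2) → ℝ)
    (f' : EuclideanSpace ℝ (Fin d1 × Fin d2) → EuclideanSpace ℝ (Fin d1 × Fin d2))
    (hf : ConvexOn ℝ Set.univ f)
    (hgrad : ∀ x, HasGradientAt f (f' x) x)
    (L : ℝ) (hL : 0 < L)
    (hlip : ∀ x y, ‖f' x - f' y‖ ≤ L * ‖x - y‖)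
    (Mhat : EuclideanSpace ℝ (Fin d1 × Fin d2))
    (hMhatS : Mhat ∈ S) (hMhatmin : ∀ x ∈ S, f Mhat ≤ f x)
    (k : ℕ) (hk : 1 ≤ k)
    (ak : ℝ) (hak : ak = 2 / ((k : ℝ) + 1))
    (Mkm1 Vkm1 Zkm1 Mk Vk : EuclideanSpace ℝ (Fin d1 × Fin d2))
    (hMkm1 : Mkm1 ∈ S)
    (hZkm1 : Zkm1 = (1 - ak) • Mkm1 + ak • Vkm1)
    (hMkS : Mk ∈ S)
    (hMkproj : ∀ x ∈ S,
      ‖Mk - (Zkm1 - (1 / L) • f' Zkm1)‖ ≤ ‖x - (Zkm1 - (1 / L) • f' Zkm1)‖)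
    (hVk : Vk = Mkm1 + (1 / ak) • (Mk - Mkm1)) :
    1 / ak ^ 2 * (f Mk - f Mhat) + L / 2 * ‖Vk - Mhat‖ ^ 2 ≤
      (1 - ak) / ak ^ 2 * (f Mkm1 - f Mhat) + L / 2 * ‖Vkm1 - Mhat‖ ^ 2 := by
  have hk1 : (1:ℝ) ≤ (k : ℝ) := by exact_mod_cast hk
  have ha0 : 0 < ak := by rw [hak]; positivity
  have ha1 : ak ≤ 1 := by
    rw [hak, div_le_one (by linarith)]
    linarith
  set g := f' Zkm1 with hg
  set x : EuclideanSpace ℝ (Fin d1 × Fin d2) := (1 - ak) • Mkm1 + ak • Mhat with hx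
  have hxS : x ∈ S := hconv hMkm1 hMhatS (by linarith) ha0.le (by ring)
  -- Mk as combination
  have hMkeq : Mk = (1 - ak) • Mkm1 + ak • Vk := by
    rw [hVk, smul_add, smul_smul, mul_one_div, div_self ha0.ne', one_smul]
    module
  have hxZ : x - Zkm1 = ak • (Mhat - Vkm1) := by rw [hx, hZkm1]; module
  have hxM : x - Mk = ak • (Mhat - Vk) := by rw [hx, hMkeq]; module
  have hnxZ : ‖x - Zkm1‖ ^ 2 = ak ^ 2 * ‖Vkm1 - Mhat‖ ^ 2 := by
    rw [hxZ, norm_smul, Real.norm_eq_abs, abs_of_pos ha0, mul_pow,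
      norm_sub_rev]
  have hnxM : ‖x - Mk‖ ^ 2 = ak ^ 2 * ‖Vk - Mhat‖ ^ 2 := by
    rw [hxM, norm_smul, Real.norm_eq_abs, abs_of_pos ha0, mul_pow, norm_sub_rev]
  -- projection variational inequality
  have hvi := apgd_proj_vi hconv hMkS hMkproj hxS
  have hvi' : ⟪g, Mk - x⟫ ≤ L * ⟪Mk - Zkm1, x - Mk⟫ := by
    have hexp : Mk - (Zkm1 - (1 / L) • g) = (Mk - Zkm1) + (1 / L) • g := by module
    rw [hexp, inner_add_left, real_inner_smul_left] at hvi
    have h2 : ⟪g, Mk - x⟫ = - ⟪g, x - Mk⟫ := by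
      rw [← inner_neg_right]; congr 1; abel
    have h3 : ⟪g, x - Mk⟫ = ⟪x - Mk, g⟫ := real_inner_comm _ _
    have h4 := mul_le_mul_of_nonneg_left hvi hL.le
    rw [mul_zero, mul_add, ← mul_assoc, mul_one_div, div_self hL.ne', one_mul] at h4
    rw [h2]
    have h5 : ⟪g, x - Mk⟫ = ⟪x - Mk, g⟫ := real_inner_comm _ _
    nlinarith [h4, h5]
  -- descent lemma
  have hdes := apgd_descent hgrad hL hlip Zkm1 Mk
  -- first-order convexity at Zkm1 toward x
  have hcvx := apgd_convex_first_order hf hgrad Zkm1 x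
  -- decompose inner products
  have hsplit : ⟪g, Mk - Zkm1⟫ = ⟪g, Mk - x⟫ + ⟪g, x - Zkm1⟫ := by
    rw [← inner_add_right]; congr 1; abel
  -- norm identity
  have hnid : ‖x - Zkm1‖ ^ 2 =
      ‖x - Mk‖ ^ 2 + 2 * ⟪x - Mk, Mk - Zkm1⟫ + ‖Mk - Zkm1‖ ^ 2 := by
    have : x - Zkm1 = (x - Mk) + (Mk - Zkm1) := by abel
    rw [this, norm_add_sq_real]
  have hsym : ⟪Mk - Zkm1, x - Mk⟫ = ⟪x - Mk, Mk - Zkm1⟫ := real_inner_comm _ _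
  -- convexity of f at the combination
  have hfx : f x ≤ (1 - ak) * f Mkm1 + ak * f Mhat :=
    hf.2 (Set.mem_univ Mkm1) (Set.mem_univ Mhat) (by linarith) ha0.le (by ring)
  -- main scalar inequality
  have hLn : L * ⟪Mk - Zkm1, x - Mk⟫
      = L / 2 * ‖x - Zkm1‖ ^ 2 - L / 2 * ‖x - Mk‖ ^ 2 - L / 2 * ‖Mk - Zkm1‖ ^ 2 := by
    rw [hsym, hnid]; ring
  have step : f Mk ≤ f x + L / 2 * ‖x - Zkm1‖ ^ 2 - L / 2 * ‖x - Mk‖ ^ 2 := by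
    linarith [hdes, hcvx, hvi', hLn, hsplit]
  have hsub : L / 2 * ‖x - Zkm1‖ ^ 2 - L / 2 * ‖x - Mk‖ ^ 2
      = L * ak ^ 2 / 2 * (‖Vkm1 - Mhat‖ ^ 2 - ‖Vk - Mhat‖ ^ 2) := by
    rw [hnxZ, hnxM]; ring
  have hr : (1 - ak) * f Mkm1 + ak * f Mhat - f Mhat = (1 - ak) * (f Mkm1 - f Mhat) := by
    ring
  have hmain : f Mk - f Mhat ≤ (1 - ak) * (f Mkm1 - f Mhat)
      + L * ak ^ 2 / 2 * (‖Vkm1 - Mhat‖ ^ 2 - ‖Vk - Mhat‖ ^ 2) := by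
    linarith [step, hfx, hsub, hr]
  -- divide by ak^2
  have hsq : (0:ℝ) < ak ^ 2 := by positivity
  have e1 : 1 / ak ^ 2 * (f Mk - f Mhat) + L / 2 * ‖Vk - Mhat‖ ^ 2
      = ((f Mk - f Mhat) + ak ^ 2 * (L / 2 * ‖Vk - Mhat‖ ^ 2)) / ak ^ 2 := by
    field_simp
  have e2 : (1 - ak) / ak ^ 2 * (f Mkm1 - f Mhat) + L / 2 * ‖Vkm1 - Mhat‖ ^ 2
      = ((1 - ak) * (f Mkm1 - f Mhat) + ak ^ 2 * (L / 2 * ‖Vkm1 - Mhat‖ ^ 2)) / ak ^ 2 := by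
    field_simp
  have hexpand : L * ak ^ 2 / 2 * (‖Vkm1 - Mhat‖ ^ 2 - ‖Vk - Mhat‖ ^ 2)
      = ak ^ 2 * (L / 2 * ‖Vkm1 - Mhat‖ ^ 2) - ak ^ 2 * (L / 2 * ‖Vk - Mhat‖ ^ 2) := by
    ring
  rw [e1, e2]
  exact (div_le_div_iff_of_pos_right hsq).2 (by linarith [hmain, hexpand])
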